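/- For the fuzzy Clifford torus, with normal sequences N_±^1 = X¹, N_±^2 = X², N_±^3 = ±X³, N_±^4 = ±X⁴ and ħ = sin(π/N), the discrete curvature K̂_N := (1/(2ħ²)) Σ_{i,j=1}^4 [X^i, N_+^j][X^j, N_+^i] + (1/(2ħ²)) Σ_{i,j=1}^4 [X^i, N_−^j][X^j, N_−^i] equals the zero matrix; consequently χ̂_N = ħ Tr K̂_N = 0. -/

import Mathlib

open Matrix
noncomputable section

/-- the discrete curvature of the fuzzy Clifford torus vanishes, and hence so does
its discrete Euler characteristic `χ̂_N = ħ Tr K̂_N`. -/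
theorem fuzzy_clifford_torus_curvature (N : ℕ) (hN : 0 < N) :
    haveI : NeZero N := ⟨hN.ne'⟩
    ∀ (ω : ℂ) (g h : Matrix (Fin N) (Fin N) ℂ)
      (X Np Nm : Fin 4 → Matrix (Fin N) (Fin N) ℂ) (hbar : ℝ)
      (Khat : Matrix (Fin N) (Fin N) ℂ),
      ω = Complex.exp (2 * Real.pi * Complex.I / N) →
      g = Matrix.diagonal (fun k : Fin N => ω ^ (k : ℕ)) →
      h = Matrix.of (fun i j : Fin N => if j = i + 1 then (1 : ℂ) else 0) →
      X 0 = (1 / (2 * (Real.sqrt 2 : ℂ))) • (gᴴ + g) →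
      X 1 = (Complex.I / (2 * (Real.sqrt 2 : ℂ))) • (gᴴ - g) →
      X 2 = (1 / (2 * (Real.sqrt 2 : ℂ))) • (hᴴ + h) →
      X 3 = (Complex.I / (2 * (Real.sqrt 2 : ℂ))) • (hᴴ - h) →
      Np 0 = X 0 → Np 1 = X 1 → Np 2 = X 2 → Np 3 = X 3 →
      Nm 0 = X 0 → Nm 1 = X 1 → Nm 2 = -(X 2) → Nm 3 = -(X 3) →
      hbar = Real.sin (Real.pi / N) →
      Khat = (1 / (2 * (hbar : ℂ) ^ 2)) •
          (∑ i : Fin 4, ∑ j : Fin 4, ⁅X i, Np j⁆ * ⁅X j, Np i⁆) +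
        (1 / (2 * (hbar : ℂ) ^ 2)) •
          (∑ i : Fin 4, ∑ j : Fin 4, ⁅X i, Nm j⁆ * ⁅X j, Nm i⁆) →
      Khat = 0 ∧ (hbar : ℂ) * Khat.trace = 0 := by
  haveI : NeZero N := ⟨hN.ne'⟩
  intro ω g h X Np Nm hbar Khat hω hg hh hX0 hX1 hX2 hX3 hNp0 hNp1 hNp2 hNp3
    hNm0 hNm1 hNm2 hNm3 hhbar hK
  letI := LieRing.ofAssociativeRing (A := Matrix (Fin N) (Fin N) ℂ)
  letI := LieAlgebra.ofAssociativeAlgebra (R := ℂ) (A := Matrix (Fin N) (Fin N) ℂ)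
  -- g commutes with gᴴ (both diagonal)
  have hgc : gᴴ * g = g * gᴴ := by
    subst hg
    rw [Matrix.diagonal_conjTranspose, Matrix.diagonal_mul_diagonal,
      Matrix.diagonal_mul_diagonal]
    exact congrArg _ (mul_comm _ _)
  -- h commutes with hᴴ (both are "shift-like": h * hᴴ = hᴴ * h = 1)
  have hh1 : h * hᴴ = 1 := by
    subst hh
    ext i j
    simp [Matrix.mul_apply, Matrix.conjTranspose_apply, Matrix.one_apply,
      ite_and, eq_comm]
  have hh2 : hᴴ * h = 1 := (mul_eq_one_comm).mp hh1
  have hhc : hᴴ * h = h * hᴴ := by rw [hh1, hh2]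
  -- the two basic commutators vanish
  have l01 : ⁅X 0, X 1⁆ = 0 := by
    rw [hX0, hX1, smul_lie, lie_smul, Ring.lie_def]
    have key : (gᴴ + g) * (gᴴ - g) = (gᴴ - g) * (gᴴ + g) := by
      simp only [add_mul, sub_mul, mul_add, mul_sub, hgc]
      abel
    rw [key, sub_self, smul_zero, smul_zero]
  have l23 : ⁅X 2, X 3⁆ = 0 := by
    rw [hX2, hX3, smul_lie, lie_smul, Ring.lie_def]
    have key : (hᴴ + h) * (hᴴ - h) = (hᴴ - h) * (hᴴ + h) := by
      simp only [add_mul, sub_mul, mul_add, mul_sub, hhc]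
      abel
    rw [key, sub_self, smul_zero, smul_zero]
  have l10 : ⁅X 1, X 0⁆ = 0 := by rw [← lie_skew, l01, neg_zero]
  have l32 : ⁅X 3, X 2⁆ = 0 := by rw [← lie_skew, l23, neg_zero]
  have hK0 : Khat = 0 := by
    rw [hK]
    simp only [Fin.sum_univ_four, hNp0, hNp1, hNp2, hNp3, hNm0, hNm1, hNm2, hNm3,
      lie_neg, lie_self, l01, l23, l10, l32, zero_mul, mul_zero, neg_mul, mul_neg,
      neg_neg, add_zero, zero_add]
    module
  refine ⟨hK0, ?_⟩
  rw [hK0, Matrix.trace_zero, mul_zero]
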